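/- Let G=(V,E) be a contextuality scenario, H a complex Hilbert space, and A = [A_{x,x'}]_{x,x'∈V} a matrix of bounded operators on H that is positive when regarded as an operator on the Hilbert-space direct sum ⊕_{x∈V} H. Then the following are equivalent: (i) Σ_{x∈e} A_{x,x} = I_H for every e ∈ E (i.e., A is a G-stochastic operator matrix); (ii) there exist a complex Hilbert space K and bounded operators U_x : H → K (x ∈ V) such that Σ_{x∈e} U_x* U_x = I_H for every e ∈ E and A_{x,x'} = U_x* U_{x'} for all x, x' ∈ V. -/

import Mathlib

noncomputable section

instance piLpCompleteSpace {ι : Type} (p : ENNReal) (β : ι → Type)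
    [∀ i, UniformSpace (β i)] [∀ i, CompleteSpace (β i)] :
    CompleteSpace (PiLp p β) :=
  (PiLp.uniformEquiv p β).completeSpace_iff.2 inferInstance

structure HilbertC where
  carrier : Type
  [normed : NormedAddCommGroup carrier]
  [ips : InnerProductSpace ℂ carrier]
  [complete : CompleteSpace carrier]

attribute [instance] HilbertC.normed HilbertC.ips HilbertC.complete

/-- The block operator on the Hilbert-space direct sum `⊕_{i ∈ ι} H` (realised as
`PiLp 2 (fun _ : ι => H)`) associated with a matrix `T` of bounded operators on `H`. -/
def blockOp {ι : Type} [Fintype ι] [DecidableEq ι]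
    {H : Type} [NormedAddCommGroup H] [InnerProductSpace ℂ H] [CompleteSpace H]
    (T : ι → ι → H →L[ℂ] H) :
    PiLp 2 (fun _ : ι => H) →L[ℂ] PiLp 2 (fun _ : ι => H) :=
  ((PiLp.continuousLinearEquiv 2 ℂ (fun _ : ι => H)).symm.toContinuousLinearMap).comp
    ((ContinuousLinearMap.pi
        (fun p => ∑ q, (T p q).comp (ContinuousLinearMap.proj q))).comp
      (PiLp.continuousLinearEquiv 2 ℂ (fun _ : ι => H)).toContinuousLinearMap)

variable {ι : Type} [Fintype ι] [DecidableEq ι]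
    {H : Type} [NormedAddCommGroup H] [InnerProductSpace ℂ H] [CompleteSpace H]

/-- inclusion of `H` as the `x`-th coordinate of the direct sum -/
def inclL (x : ι) : H →L[ℂ] PiLp 2 (fun _ : ι => H) :=
  ((PiLp.continuousLinearEquiv 2 ℂ (fun _ : ι => H)).symm.toContinuousLinearMap).comp
    (ContinuousLinearMap.pi (fun p => if p = x then ContinuousLinearMap.id ℂ H else 0))

def projL (x : ι) : PiLp 2 (fun _ : ι => H) →L[ℂ] H :=
  (ContinuousLinearMap.proj x).comp
    (PiLp.continuousLinearEquiv 2 ℂ (fun _ : ι => H)).toContinuousLinearMap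

lemma inclL_apply (x : ι) (h : H) (p : ι) :
    (inclL (H := H) x h : ∀ _ : ι, H) p = if p = x then h else 0 := by
  simp [inclL, ContinuousLinearMap.pi]
  split <;> simp

lemma adjoint_inclL (x : ι) :
    ContinuousLinearMap.adjoint (inclL (H := H) x) = projL x := by
  symm
  rw [ContinuousLinearMap.eq_adjoint_iff]
  intro f h
  simp only [PiLp.inner_apply]
  rw [Finset.sum_eq_single x]
  · simp [projL, inclL_apply]
  · intro q _ hq
    simp [inclL_apply, hq]
  · simp

lemma entry_blockOp (T : ι → ι → H →L[ℂ] H) (x x' : ι) :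
    (projL x).comp ((blockOp T).comp (inclL x')) = T x x' := by
  ext h
  simp only [ContinuousLinearMap.comp_apply, blockOp, projL,
    ContinuousLinearEquiv.coe_coe, PiLp.continuousLinearEquiv_apply,
    PiLp.continuousLinearEquiv_symm_apply, ContinuousLinearMap.proj_apply,
    ContinuousLinearMap.pi_apply, ContinuousLinearMap.sum_apply, Equiv.apply_symm_apply]
  rw [Finset.sum_eq_single x']
  · simp [inclL_apply]
  · intro q _ hq
    simp [inclL_apply, hq]
  · simp

set_option synthInstance.maxHeartbeats 1000000 in
set_option maxHeartbeats 2000000 in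
set_option linter.unusedSectionVars false in
theorem stmt3 (V : Type) [Fintype V] [DecidableEq V] (E : Finset (Finset V))
    (hEne : E.Nonempty) (hene : ∀ e ∈ E, e.Nonempty)
    (hcover : ∀ x : V, ∃ e ∈ E, x ∈ e)
    (H : Type) [NormedAddCommGroup H] [InnerProductSpace ℂ H] [CompleteSpace H]
    (A : V → V → H →L[ℂ] H)
    (hpos : (blockOp A).IsPositive) :
    (∀ e ∈ E, ∑ x ∈ e, A x x = 1) ↔
      ∃ (K : HilbertC) (U : V → H →L[ℂ] K.carrier),
        (∀ e ∈ E, ∑ x ∈ e, (ContinuousLinearMap.adjoint (U x)).comp (U x) = 1) ∧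
        ∀ x x' : V, A x x' = (ContinuousLinearMap.adjoint (U x)).comp (U x') := by
  constructor
  · intro h
    have hnn : (0 : _) ≤ blockOp A := (ContinuousLinearMap.nonneg_iff_isPositive _).2 hpos
    set S := CFC.sqrt (blockOp A) with hSdef
    have hSnn : 0 ≤ S := CFC.sqrt_nonneg _
    have hSS : S * S = blockOp A := CFC.sqrt_mul_sqrt_self _ hnn
    have hSadj : ContinuousLinearMap.adjoint S = S := by
      rw [← ContinuousLinearMap.star_eq_adjoint]
      exact (IsSelfAdjoint.of_nonneg hSnn).star_eq
    have key : ∀ x x' : V,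
        (ContinuousLinearMap.adjoint (S.comp (inclL x))).comp (S.comp (inclL x')) = A x x' := by
      intro x x'
      rw [ContinuousLinearMap.adjoint_comp, adjoint_inclL, hSadj]
      have : (projL x).comp ((S.comp S).comp (inclL x')) = A x x' := by
        rw [show S.comp S = S * S from rfl, hSS]
        exact entry_blockOp A x x'
      rw [← this]
      ext v
      simp [ContinuousLinearMap.comp_apply]
    refine ⟨⟨PiLp 2 (fun _ : V => H)⟩, fun x => S.comp (inclL x), ?_, ?_⟩
    · intro e he
      calc ∑ x ∈ e, (ContinuousLinearMap.adjoint (S.comp (inclL x))).comp (S.comp (inclL x))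
          = ∑ x ∈ e, A x x := Finset.sum_congr rfl fun x _ => key x x
        _ = 1 := h e he
    · exact fun x x' => (key x x').symm
  · rintro ⟨K, U, hU, hA⟩ e he
    calc ∑ x ∈ e, A x x
        = ∑ x ∈ e, (ContinuousLinearMap.adjoint (U x)).comp (U x) :=
          Finset.sum_congr rfl fun x _ => hA x x
      _ = 1 := hU e he
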